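/- Let M' = ⟨(1,0), (0,2)⟩ and M = M' ∪ (ℤ × {n ∈ ℤ : n ≥ 3}) as an additive submonoid of ℤ². Then M is a reduced monoid with set of atoms exactly {(1,0), (0,2)}, and M is quasi-atomic but not almost atomic. -/

import Mathlib

/-- An element of ℤ² invertible within the submonoid M. -/
def IsUnitIn (M : AddSubmonoid (ℤ × ℤ)) (x : ℤ × ℤ) : Prop :=
  x ∈ M ∧ -x ∈ M

/-- An atom of the submonoid M of ℤ². -/
def IsAtomIn (M : AddSubmonoid (ℤ × ℤ)) (a : ℤ × ℤ) : Prop :=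
  a ∈ M ∧ ¬ IsUnitIn M a ∧
    ∀ r s : ℤ × ℤ, r ∈ M → s ∈ M → a = r + s → IsUnitIn M r ∨ IsUnitIn M s

/-- The submonoid generated by the atoms of M. -/
def AtomicElems (M : AddSubmonoid (ℤ × ℤ)) : AddSubmonoid (ℤ × ℤ) :=
  AddSubmonoid.closure {a : ℤ × ℤ | IsAtomIn M a}

lemma memC (x : ℤ × ℤ) :
    x ∈ AddSubmonoid.closure {((1 : ℤ), (0 : ℤ)), ((0 : ℤ), (2 : ℤ))} ↔
      0 ≤ x.1 ∧ 0 ≤ x.2 ∧ Even x.2 := by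
  constructor
  · intro hx
    induction hx using AddSubmonoid.closure_induction with
    | mem y hy => rcases hy with h | h <;> subst h <;> norm_num
    | zero => norm_num
    | add y z hy hz ihy ihz =>
      exact ⟨by simp; omega, by simp; omega, by simpa using Even.add ihy.2.2 ihz.2.2⟩
  · rintro ⟨h1, h2, k, hk⟩
    have hx : x = x.1.toNat • ((1:ℤ),(0:ℤ)) + k.toNat • ((0:ℤ),(2:ℤ)) := by
      ext <;> simp [Prod.smul_def, nsmul_eq_mul] <;> omega
    rw [hx]
    refine add_mem (nsmul_mem ?_ _) (nsmul_mem ?_ _)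
    · exact AddSubmonoid.subset_closure (Set.mem_insert _ _)
    · exact AddSubmonoid.subset_closure (Set.mem_insert_of_mem _ rfl)

/-- Let M = ⟨(1,0),(0,2)⟩ ∪ (ℤ × ℤ_{≥3}).  Then M is reduced, its atoms are
exactly (1,0) and (0,2), and M is quasi-atomic but not almost atomic. -/
theorem M12_quasi_atomic_not_almost_atomic (M : AddSubmonoid (ℤ × ℤ))
    (hM : (M : Set (ℤ × ℤ)) =
      (AddSubmonoid.closure {((1 : ℤ), (0 : ℤ)), ((0 : ℤ), (2 : ℤ))} : Set (ℤ × ℤ))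
        ∪ {p : ℤ × ℤ | 3 ≤ p.2}) :
    (∀ x ∈ M, IsUnitIn M x → x = 0) ∧
    ({a : ℤ × ℤ | IsAtomIn M a} = {((1 : ℤ), (0 : ℤ)), ((0 : ℤ), (2 : ℤ))}) ∧
    (∀ b ∈ M, ¬ IsUnitIn M b → ∃ m ∈ M, b + m ∈ AtomicElems M) ∧
    ¬ (∀ b ∈ M, ¬ IsUnitIn M b →
        ∃ c : ℤ × ℤ, c ∈ AtomicElems M ∧ b + c ∈ AtomicElems M) := by
  have hmem : ∀ x : ℤ × ℤ, x ∈ M ↔ ((0 ≤ x.1 ∧ 0 ≤ x.2 ∧ Even x.2) ∨ 3 ≤ x.2) := by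
    intro x
    have h0 : x ∈ M ↔ x ∈ (M : Set (ℤ × ℤ)) := Iff.rfl
    rw [h0, hM]
    simp only [Set.mem_union, Set.mem_setOf_eq, SetLike.mem_coe, memC]
  have hred : ∀ x ∈ M, IsUnitIn M x → x = 0 := by
    rintro x _ ⟨h1, h2⟩
    rw [hmem] at h1 h2
    simp only [Prod.fst_neg, Prod.snd_neg] at h2
    have e1 : x.1 = 0 ∧ x.2 = 0 := by
      rcases h1 with ⟨a, b, _⟩ | a <;> rcases h2 with ⟨c, d, _⟩ | c <;> omega
    exact Prod.ext e1.1 e1.2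
  have hunit0 : IsUnitIn M 0 := ⟨zero_mem M, by simpa using zero_mem M⟩
  have hunit : ∀ x : ℤ × ℤ, IsUnitIn M x → x = 0 := fun x hu => hred x hu.1 hu
  have hatoms : {a : ℤ × ℤ | IsAtomIn M a} = {((1 : ℤ), (0 : ℤ)), ((0 : ℤ), (2 : ℤ))} := by
    ext a
    simp only [Set.mem_setOf_eq, Set.mem_insert_iff, Set.mem_singleton_iff]
    constructor
    · rintro ⟨haM, hnu, hsplit⟩
      rw [hmem] at haM
      by_contra hcon
      push_neg at hcon
      obtain ⟨hc1, hc2⟩ := hcon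
      have ha0 : a ≠ 0 := fun h => hnu (h ▸ hunit0)
      rcases haM with ⟨h1, h2, k, hk⟩ | h3
      · -- a in the closure part
        by_cases hy : a.2 = 0
        · have ha1 : 2 ≤ a.1 := by
            have e1 : a.1 ≠ 0 := by
              intro h; exact ha0 (Prod.ext h hy)
            have e2 : a.1 ≠ 1 := by
              intro h; exact hc1 (Prod.ext h hy)
            omega
          have hs := hsplit ((1:ℤ), (0:ℤ)) (a.1 - 1, a.2)
            ((hmem _).2 (Or.inl (by norm_num)))
            ((hmem _).2 (Or.inl ⟨by simp; omega, by simp; omega, ⟨k, by simpa using hk⟩⟩))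
            (by ext <;> simp)
          rcases hs with h | h <;> have := hunit _ h <;>
            rw [Prod.ext_iff] at this <;> simp at this <;> omega
        · have hy2 : 2 ≤ a.2 := by omega
          have ha2 : a ≠ ((0:ℤ), (2:ℤ)) := hc2
          have hs := hsplit ((0:ℤ), (2:ℤ)) (a.1, a.2 - 2)
            ((hmem _).2 (Or.inl (by norm_num)))
            ((hmem _).2 (Or.inl ⟨by simpa using h1, by simp; omega, ⟨k - 1, by simp; omega⟩⟩))
            (by ext <;> simp)
          rcases hs with h | h <;> have := hunit _ h <;>
            rw [Prod.ext_iff] at this <;> simp at this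
          · exact ha2 (Prod.ext (by omega) (by omega))
      · -- 3 ≤ a.2
        have hs := hsplit ((1:ℤ), (0:ℤ)) (a.1 - 1, a.2)
          ((hmem _).2 (Or.inl (by norm_num)))
          ((hmem _).2 (Or.inr h3))
          (by ext <;> simp)
        rcases hs with h | h <;> have := hunit _ h <;>
          rw [Prod.ext_iff] at this <;> simp at this <;> omega
    · have key : ∀ r s : ℤ × ℤ, r ∈ M → s ∈ M →
          ((r.1 = 0 ∧ r.2 = 0) ∨ (s.1 = 0 ∧ s.2 = 0) → IsUnitIn M r ∨ IsUnitIn M s) := by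
        rintro r s _ _ (⟨e1, e2⟩ | ⟨e1, e2⟩)
        · left; rw [show r = 0 from Prod.ext e1 e2]; exact hunit0
        · right; rw [show s = 0 from Prod.ext e1 e2]; exact hunit0
      rintro (rfl | rfl)
      · refine ⟨(hmem _).2 (Or.inl (by norm_num)), ?_, ?_⟩
        · intro hu; have := hunit _ hu; rw [Prod.ext_iff] at this; simp at this
        · intro r s hr hs heq
          refine key r s hr hs ?_
          rw [hmem] at hr hs
          have e1 : 1 = r.1 + s.1 ∧ 0 = r.2 + s.2 := by
            rw [Prod.ext_iff] at heq; simpa using heq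
          rcases hr with ⟨a1, a2, u, hu⟩ | a1 <;> rcases hs with ⟨b1, b2, v, hv⟩ | b1 <;> omega
      · refine ⟨(hmem _).2 (Or.inl (by norm_num)), ?_, ?_⟩
        · intro hu; have := hunit _ hu; rw [Prod.ext_iff] at this; simp at this
        · intro r s hr hs heq
          refine key r s hr hs ?_
          rw [hmem] at hr hs
          have e1 : 0 = r.1 + s.1 ∧ 2 = r.2 + s.2 := by
            rw [Prod.ext_iff] at heq; simpa using heq
          rcases hr with ⟨a1, a2, u, hu⟩ | a1 <;> rcases hs with ⟨b1, b2, v, hv⟩ | b1 <;> omega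
  have hAE : AtomicElems M = AddSubmonoid.closure {((1 : ℤ), (0 : ℤ)), ((0 : ℤ), (2 : ℤ))} := by
    unfold AtomicElems; rw [hatoms]
  refine ⟨hred, hatoms, ?_, ?_⟩
  · intro b hb _
    rw [hmem] at hb
    rcases hb with hC | h3
    · exact ⟨0, zero_mem M, by rw [add_zero, hAE]; exact (memC b).2 hC⟩
    · refine ⟨(-b.1, b.2), (hmem _).2 (Or.inr h3), ?_⟩
      rw [hAE]
      refine (memC _).2 ⟨by simp, by simp; omega, ⟨b.2, by simp⟩⟩
  · intro h
    obtain ⟨c, hc, hbc⟩ := h ((0:ℤ), (3:ℤ)) ((hmem _).2 (Or.inr (by norm_num)))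
      (fun hu => by have := hunit _ hu; rw [Prod.ext_iff] at this; simp at this)
    rw [hAE] at hc hbc
    obtain ⟨_, _, k, hk⟩ := (memC _).1 hc
    obtain ⟨_, _, m, hm⟩ := (memC _).1 hbc
    simp at hm
    omega
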